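/- Let q, q' be positive integers, p = gcd(q', q), q'₀ = q'/p, q₀ = q/p, 𝔮 = q'·q/p. Let a, a' be integers with gcd(a', q') = 1, and let x, X, y, Y be integers with gcd(x, X) = 1 satisfying a'·q₀·x ≡ a·q'₀·y (mod 𝔮) and a'·q₀·X ≡ a·q'₀·Y (mod 𝔮). Then q'₀ = 1. (Symmetrically, if gcd(y,Y)=1 and gcd(a,q)=1, then q₀ = 1; hence q' = q = 𝔮.) -/

import Mathlib

theorem stmt_6 (q q' : ℤ) (hq : 0 < q) (hq' : 0 < q')
    (a a' x X y Y : ℤ)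
    (ha : Int.gcd a q = 1) (ha' : Int.gcd a' q' = 1)
    (hxX : Int.gcd x X = 1) (hyY : Int.gcd y Y = 1)
    (h1 : (q' * q / (Int.gcd q' q : ℤ)) ∣
      (a' * (q / (Int.gcd q' q : ℤ)) * x - a * (q' / (Int.gcd q' q : ℤ)) * y))
    (h2 : (q' * q / (Int.gcd q' q : ℤ)) ∣
      (a' * (q / (Int.gcd q' q : ℤ)) * X - a * (q' / (Int.gcd q' q : ℤ)) * Y)) :
    q' / (Int.gcd q' q : ℤ) = 1 ∧ q / (Int.gcd q' q : ℤ) = 1 ∧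
    q' = q ∧ q' * q / (Int.gcd q' q : ℤ) = q := by
  set g : ℤ := (Int.gcd q' q : ℤ) with hgdef
  have hgn : 0 < Int.gcd q' q := Int.gcd_pos_of_ne_zero_left q hq'.ne'
  have hg : 0 < g := by rw [hgdef]; exact_mod_cast hgn
  have hgq' : g ∣ q' := Int.gcd_dvd_left q' q
  have hgq : g ∣ q := Int.gcd_dvd_right q' q
  set q0' : ℤ := q' / g with hq0'def
  set q0 : ℤ := q / g with hq0def
  have hq0'pos : 0 < q0' := Int.ediv_pos_of_pos_of_dvd hq' hg.le hgq'
  have hq0pos : 0 < q0 := Int.ediv_pos_of_pos_of_dvd hq hg.le hgq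
  have hq'eq : q' = g * q0' := (Int.ediv_mul_cancel hgq').symm.trans (mul_comm _ _)
  have hqeq : q = g * q0 := (Int.ediv_mul_cancel hgq).symm.trans (mul_comm _ _)
  have hcop : IsCoprime q0' q0 := by
    rw [Int.isCoprime_iff_gcd_eq_one]
    exact Int.gcd_div_gcd_div_gcd hgn
  -- 𝔮 = q0' * q = q0 * q'
  have hQ1 : q' * q / g = q0' * q := by
    rw [mul_comm q' q, Int.mul_ediv_assoc q hgq', mul_comm]
  have hQ2 : q' * q / g = q0 * q' := by
    rw [Int.mul_ediv_assoc q' hgq, mul_comm]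
  -- coprimalities with a, a'
  have hca' : IsCoprime q0' a' := by
    have : IsCoprime a' q' := Int.isCoprime_iff_gcd_eq_one.mpr ha'
    exact (this.of_isCoprime_of_dvd_right ⟨g, by rw [hq'eq, mul_comm]⟩).symm
  have hca : IsCoprime q0 a := by
    have : IsCoprime a q := Int.isCoprime_iff_gcd_eq_one.mpr ha
    exact (this.of_isCoprime_of_dvd_right ⟨g, by rw [hqeq, mul_comm]⟩).symm
  -- q0' divides x and X
  have key' : ∀ z w : ℤ, (q' * q / g) ∣ (a' * q0 * z - a * q0' * w) → q0' ∣ z := by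
    intro z w h
    have h1' : q0' ∣ a' * q0 * z - a * q0' * w := dvd_trans ⟨q, hQ1⟩ h
    have h2' : q0' ∣ a * q0' * w := ⟨a * w, by ring⟩
    have h3' : q0' ∣ a' * q0 * z := by
      have := dvd_add h1' h2'
      simpa using this
    have hc : IsCoprime q0' (a' * q0) := hca'.mul_right hcop
    exact hc.dvd_of_dvd_mul_left h3'
  have key : ∀ z w : ℤ, (q' * q / g) ∣ (a' * q0 * z - a * q0' * w) → q0 ∣ w := by
    intro z w h
    have h1' : q0 ∣ a' * q0 * z - a * q0' * w := dvd_trans ⟨q', hQ2⟩ h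
    have h2' : q0 ∣ a' * q0 * z := ⟨a' * z, by ring⟩
    have h3' : q0 ∣ a * q0' * w := by
      have := dvd_sub h2' h1'
      simpa using this
    have hc : IsCoprime q0 (a * q0') := hca.mul_right hcop.symm
    exact hc.dvd_of_dvd_mul_left h3'
  have hx : q0' ∣ x := key' x y h1
  have hX : q0' ∣ X := key' X Y h2
  have hy : q0 ∣ y := key x y h1
  have hY : q0 ∣ Y := key X Y h2
  have hq0'1 : q0' = 1 := by
    have : q0' ∣ (Int.gcd x X : ℤ) := Int.dvd_coe_gcd hx hX
    rw [hxX] at this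
    exact Int.eq_one_of_dvd_one hq0'pos.le (by exact_mod_cast this)
  have hq01 : q0 = 1 := by
    have : q0 ∣ (Int.gcd y Y : ℤ) := Int.dvd_coe_gcd hy hY
    rw [hyY] at this
    exact Int.eq_one_of_dvd_one hq0pos.le (by exact_mod_cast this)
  refine ⟨hq0'1, hq01, ?_, ?_⟩
  · rw [hq'eq, hqeq, hq0'1, hq01]
  · rw [hQ1, hq0'1, one_mul]
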